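/- Let n ≥ 1, λ ≥ 1, d_σ > 0, σ_0 > 0. Let (ξ_t)_{t∈ℕ} be i.i.d. ℝⁿ-valued random vectors, each distributed as the vector (N_{1:λ}, N_2, …, N_n) with independent coordinates, first coordinate distributed as the minimum of λ i.i.d. standard normals and the other n−1 coordinates standard normal. Define σ_{t+1} = σ_t · exp((1/(2 d_σ)) (‖ξ_t‖²/n − 1)) (the CSA-ES step-size recursion without cumulation, c = 1). Then almost surely (1/t) ln(σ_t/σ_0) converges, as t → ∞, to Δ_σ := (1/(2 d_σ n)) (E(N_{1:λ}²) − 1). -/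

import Mathlib

open MeasureTheory ProbabilityTheory Filter Real
open scoped ENNReal NNReal

/-- Law of the minimum (first order statistic) of `lam` i.i.d. standard normal
random variables. -/
noncomputable def minLaw (lam : ℕ) : Measure ℝ :=
  (Measure.pi fun _ : Fin lam => gaussianReal 0 1).map fun x => ⨅ i, x i

instance (lam : ℕ) : IsProbabilityMeasure (minLaw lam) := by
  unfold minLaw
  exact Measure.isProbabilityMeasure_map
    ((Measurable.iInf fun i => measurable_pi_apply i).aemeasurable)

/-- Law of the selected step `(N_{1:λ}, N_2, …, N_n)`: independent coordinates, the
first coordinate distributed as the minimum of `lam` i.i.d. standard normals and the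
other `n - 1` coordinates standard normal. -/
noncomputable def xiLaw (n lam : ℕ) : Measure (Fin n → ℝ) :=
  Measure.pi fun i => if (i : ℕ) = 0 then minLaw lam else gaussianReal 0 1


lemma integrable_sq_exp : Integrable (fun x : ℝ => x ^ 2 * Real.exp (-(1/2) * x ^ 2)) := by
  have h := integrable_rpow_mul_exp_neg_mul_sq (b := 1/2) (by norm_num) (s := 2) (by norm_num)
  refine h.congr (Filter.Eventually.of_forall fun x => ?_)
  simp [Real.rpow_two]

lemma integrable_exp_sq : Integrable (fun x : ℝ => Real.exp (-(1/2) * x ^ 2)) :=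
  integrable_exp_neg_mul_sq (by norm_num)

lemma tendsto_mul_exp_atTop : Tendsto (fun x : ℝ => x * Real.exp (-(1/2) * x ^ 2)) atTop (nhds 0) := by
  have h := rpow_mul_exp_neg_mul_sq_isLittleO_exp_neg (b := (1/2:ℝ)) (by norm_num) 1
  have h2 : (fun x : ℝ => x * Real.exp (-(1/2) * x ^ 2)) =ᶠ[atTop] fun x => x ^ (1:ℝ) * Real.exp (-(1/2) * x ^ 2) := by
    filter_upwards [eventually_ge_atTop (0:ℝ)] with x hx
    rw [Real.rpow_one]
  exact (h.congr' h2.symm (Filter.EventuallyEq.refl _ _)).trans_tendsto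
    (Real.tendsto_exp_atBot.comp (tendsto_id.const_mul_atTop_of_neg (by norm_num)))

lemma key_deriv (x : ℝ) :
    HasDerivAt (fun x : ℝ => -x * Real.exp (-(1/2) * x ^ 2))
      (x ^ 2 * Real.exp (-(1/2) * x ^ 2) - Real.exp (-(1/2) * x ^ 2)) x := by
  have h1 : HasDerivAt (fun x : ℝ => Real.exp (-(1/2) * x ^ 2))
      (Real.exp (-(1/2) * x ^ 2) * (-(1/2) * (2 * x))) x := by
    exact (((hasDerivAt_pow 2 x).const_mul (-(1/2:ℝ))).exp).congr_deriv (by ring)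
  have h2 := (hasDerivAt_id x).neg.mul h1
  refine (h2.congr_deriv ?_).congr_of_eventuallyEq (Filter.Eventually.of_forall fun y => ?_)
  · simp only [Pi.neg_apply, id_eq]; ring
  · simp [Pi.mul_apply]

lemma integral_sq_exp : ∫ x : ℝ, x ^ 2 * Real.exp (-(1/2) * x ^ 2) = Real.sqrt (2 * π) := by
  have hint : Integrable (fun x : ℝ => x ^ 2 * Real.exp (-(1/2) * x ^ 2) - Real.exp (-(1/2) * x ^ 2)) :=
    integrable_sq_exp.sub integrable_exp_sq
  have htop : Tendsto (fun x : ℝ => -x * Real.exp (-(1/2) * x ^ 2)) atTop (nhds 0) := by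
    have := tendsto_mul_exp_atTop.neg
    simpa using this
  have hbot : Tendsto (fun x : ℝ => -x * Real.exp (-(1/2) * x ^ 2)) atBot (nhds 0) := by
    have h := tendsto_mul_exp_atTop.comp tendsto_neg_atBot_atTop
    exact Filter.Tendsto.congr (fun x => by simp [Function.comp, neg_sq]) h
  have h0 := integral_of_hasDerivAt_of_tendsto key_deriv hint hbot htop
  rw [sub_zero, integral_sub integrable_sq_exp integrable_exp_sq, sub_eq_zero] at h0
  rw [h0]
  rw [show (fun x : ℝ => Real.exp (-(1/2) * x ^ 2)) = fun x : ℝ => Real.exp (-(1/2 : ℝ) * x ^ 2) from rfl,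
    integral_gaussian, show π / (1/2 : ℝ) = 2 * π by ring]
lemma gauss_pdf_eq (x : ℝ) :
    gaussianPDFReal 0 1 x = (Real.sqrt (2 * π))⁻¹ * Real.exp (-(1/2) * x ^ 2) := by
  unfold gaussianPDFReal
  norm_num
  left
  ring_nf

lemma integrable_sq_mul_pdf :
    Integrable (fun x : ℝ => x ^ 2 * gaussianPDFReal 0 1 x) := by
  have := (integrable_sq_exp.const_mul ((Real.sqrt (2 * π))⁻¹))
  refine this.congr (Filter.Eventually.of_forall fun x => ?_)
  simp only [gauss_pdf_eq]; ring

lemma integrable_sq_gaussian : Integrable (fun x : ℝ => x ^ 2) (gaussianReal 0 1) := by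
  rw [gaussianReal_of_var_ne_zero 0 one_ne_zero]
  rw [integrable_withDensity_iff (measurable_gaussianPDF 0 1)
    (Filter.Eventually.of_forall fun x => ENNReal.ofReal_lt_top)]
  refine integrable_sq_mul_pdf.congr (Filter.Eventually.of_forall fun x => ?_)
  simp only [gaussianPDF, ENNReal.toReal_ofReal (gaussianPDFReal_nonneg 0 1 x)]

lemma integral_sq_gaussian : ∫ x, x ^ 2 ∂(gaussianReal 0 1) = 1 := by
  rw [gaussianReal_of_var_ne_zero 0 one_ne_zero]
  have hpdf : gaussianPDF 0 1 = fun x => ((fun x => (gaussianPDFReal 0 1 x).toNNReal) x : ℝ≥0∞) := rfl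
  rw [hpdf, integral_withDensity_eq_integral_smul
    (by exact (measurable_gaussianPDFReal 0 1).real_toNNReal) (fun x => x ^ 2)]
  have : ∀ x : ℝ, (gaussianPDFReal 0 1 x).toNNReal • x ^ 2
      = (Real.sqrt (2 * π))⁻¹ * (x ^ 2 * Real.exp (-(1/2) * x ^ 2)) := by
    intro x
    rw [NNReal.smul_def, Real.coe_toNNReal _ (gaussianPDFReal_nonneg 0 1 x), smul_eq_mul, gauss_pdf_eq]
    ring
  rw [show (fun x : ℝ => (gaussianPDFReal 0 1 x).toNNReal • x ^ 2)
      = fun x => (Real.sqrt (2 * π))⁻¹ * (x ^ 2 * Real.exp (-(1/2) * x ^ 2)) from funext this,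
    integral_const_mul, integral_sq_exp]
  rw [inv_mul_cancel₀]
  positivity

lemma map_eval_pi {ι : Type*} [Fintype ι] [DecidableEq ι] {α : ι → Type*} [∀ i, MeasurableSpace (α i)]
    (μ : ∀ i, Measure (α i)) [∀ i, IsProbabilityMeasure (μ i)] (i : ι) :
    (Measure.pi μ).map (Function.eval i) = μ i := by
  ext s hs
  rw [Measure.map_apply (measurable_pi_apply i) hs]
  have hpre : Function.eval i ⁻¹' s
      = Set.pi Set.univ (Function.update (fun j => (Set.univ : Set (α j))) i s) := by
    ext x
    simp only [Set.mem_preimage, Set.mem_pi, Set.mem_univ, true_implies, Function.update_apply]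
    constructor
    · intro hx j
      by_cases hj : j = i
      · subst hj; simpa using hx
      · simp [hj]
    · intro hx
      have := hx i
      simpa using this
  rw [hpre, Measure.pi_pi]
  rw [Finset.prod_eq_single i (fun j _ hj => by simp [Function.update_apply, hj])
    (fun h => absurd (Finset.mem_univ i) h)]
  simp

lemma integrable_sq_pi_eval {ι : Type*} [Fintype ι] [DecidableEq ι]
    (μ : ι → Measure ℝ) [∀ i, IsProbabilityMeasure (μ i)]
    (h : ∀ i, Integrable (fun x : ℝ => x ^ 2) (μ i)) (i : ι) :
    Integrable (fun x : ι → ℝ => (x i) ^ 2) (Measure.pi μ) := by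
  have := h i
  rw [← map_eval_pi μ i] at this
  exact (integrable_map_measure (by fun_prop : Measurable fun x : ℝ => x ^ 2).aestronglyMeasurable
    (measurable_pi_apply i).aemeasurable).mp this

lemma integrable_sq_minLaw (lam : ℕ) (hlam : 1 ≤ lam) :
    Integrable (fun x : ℝ => x ^ 2) (minLaw lam) := by
  haveI : Nonempty (Fin lam) := ⟨⟨0, hlam⟩⟩
  have hmeas : Measurable (fun x : Fin lam → ℝ => ⨅ i, x i) :=
    Measurable.iInf fun i => measurable_pi_apply i
  rw [minLaw, integrable_map_measure
    (by fun_prop : Measurable fun x : ℝ => x ^ 2).aestronglyMeasurable hmeas.aemeasurable]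
  have hsum : Integrable (fun x : Fin lam → ℝ => ∑ i, (x i) ^ 2)
      (Measure.pi fun _ : Fin lam => gaussianReal 0 1) := by
    apply integrable_finset_sum
    intro i _
    exact integrable_sq_pi_eval _ (fun _ => integrable_sq_gaussian) i
  refine hsum.mono ((hmeas.pow_const 2).aestronglyMeasurable)
    (Filter.Eventually.of_forall fun x => ?_)
  obtain ⟨j, hj⟩ := Finite.exists_min x
  have hinf : ⨅ i, x i = x j :=
    le_antisymm (ciInf_le (Finite.bddBelow_range _) j) (le_ciInf hj)
  simp only [Function.comp_apply, Real.norm_eq_abs]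
  rw [abs_of_nonneg (by positivity), abs_of_nonneg (by positivity), hinf]
  exact Finset.single_le_sum (fun i _ => sq_nonneg (x i)) (Finset.mem_univ j)

instance (n lam : ℕ) (i : Fin n) :
    IsProbabilityMeasure (if (i : ℕ) = 0 then minLaw lam else gaussianReal 0 1) := by
  split <;> infer_instance

instance (n lam : ℕ) : IsProbabilityMeasure (xiLaw n lam) := by
  unfold xiLaw; infer_instance

lemma integrable_sq_coord (n lam : ℕ) (hlam : 1 ≤ lam) (i : Fin n) :
    Integrable (fun x : Fin n → ℝ => (x i) ^ 2) (xiLaw n lam) := by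
  refine integrable_sq_pi_eval _ (fun j => ?_) i
  split
  · exact integrable_sq_minLaw lam hlam
  · exact integrable_sq_gaussian

lemma integrable_sum_sq (n lam : ℕ) (hlam : 1 ≤ lam) :
    Integrable (fun x : Fin n → ℝ => ∑ i, (x i) ^ 2) (xiLaw n lam) :=
  integrable_finset_sum _ fun i _ => integrable_sq_coord n lam hlam i

lemma integral_sum_sq (n lam : ℕ) (hn : 1 ≤ n) (hlam : 1 ≤ lam) :
    ∫ x, (∑ i, (x i) ^ 2) ∂(xiLaw n lam)
      = (∫ y, y ^ 2 ∂(minLaw lam)) + ((n : ℝ) - 1) := by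
  haveI : NeZero n := ⟨by omega⟩
  rw [integral_finset_sum _ fun i _ => integrable_sq_coord n lam hlam i]
  have hcoord : ∀ i : Fin n, ∫ x, (x i) ^ 2 ∂(xiLaw n lam)
      = if (i : ℕ) = 0 then (∫ y, y ^ 2 ∂(minLaw lam)) else 1 := by
    intro i
    have hmap : ∫ x, (x i) ^ 2 ∂(xiLaw n lam)
        = ∫ y, y ^ 2 ∂(if (i : ℕ) = 0 then minLaw lam else gaussianReal 0 1) := by
      rw [xiLaw, ← map_eval_pi (fun j : Fin n => if (j : ℕ) = 0 then minLaw lam else gaussianReal 0 1) i,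
        integral_map (measurable_pi_apply i).aemeasurable
          (by fun_prop : Measurable fun x : ℝ => x ^ 2).aestronglyMeasurable]
    rw [hmap]
    by_cases h : (i : ℕ) = 0
    · simp [h]
    · simp [h, integral_sq_gaussian]
  simp_rw [hcoord]
  have : ∀ i : Fin n, (if (i : ℕ) = 0 then (∫ y, y ^ 2 ∂(minLaw lam)) else 1)
      = (if i = (0 : Fin n) then ((∫ y, y ^ 2 ∂(minLaw lam)) - 1) else 0) + 1 := by
    intro i
    by_cases h : (i : ℕ) = 0
    · simp [Fin.ext_iff, h]
    · simp [Fin.ext_iff, h]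
  simp_rw [this]
  rw [Finset.sum_add_distrib, Finset.sum_ite_eq' Finset.univ (0 : Fin n)
    (fun _ => (∫ y, y ^ 2 ∂(minLaw lam)) - 1), Finset.sum_const, Finset.card_univ, Fintype.card_fin]
  simp [Finset.mem_univ]
  ring

/-- For the `(1,λ)`-CSA-ES without cumulation (`c = 1`) on linear
functions, `(1/t) ln(σ_t/σ₀)` converges almost surely to
`Δ_σ = (1/(2 d_σ n)) (E(N_{1:λ}²) − 1)`. -/
theorem stmt_5 {n lam : ℕ} (hn : 1 ≤ n) (hlam : 1 ≤ lam)
    {Ω : Type*} [MeasureSpace Ω] [IsProbabilityMeasure (ℙ : Measure Ω)]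
    (d σ0 : ℝ) (hd : 0 < d) (hσ0 : 0 < σ0)
    (ξ : ℕ → Ω → (Fin n → ℝ)) (hξmeas : ∀ t, Measurable (ξ t))
    (hξindep : iIndepFun ξ ℙ)
    (hξlaw : ∀ t, Measure.map (ξ t) ℙ = xiLaw n lam)
    (σ : ℕ → Ω → ℝ) (h0 : ∀ ω, σ 0 ω = σ0)
    (hrec : ∀ t ω, σ (t + 1) ω =
      σ t ω * Real.exp ((1 / (2 * d)) * ((∑ i, (ξ t ω i) ^ 2) / n - 1))) :
    ∀ᵐ ω ∂ℙ, Tendsto (fun t : ℕ => Real.log (σ t ω / σ0) / t) atTop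
      (nhds ((1 / (2 * d * n)) * ((∫ x, x ^ 2 ∂(minLaw lam)) - 1))) := by

  haveI : NeZero n := ⟨by omega⟩
  set M := ∫ x, x ^ 2 ∂(minLaw lam) with hM
  set f : (Fin n → ℝ) → ℝ := fun x => (1 / (2 * d)) * ((∑ i, x i ^ 2) / n - 1) with hf
  have hfm : Measurable f := by
    rw [hf]; fun_prop
  have hintf : Integrable f (xiLaw n lam) := by
    rw [hf]
    exact (((integrable_sum_sq n lam hlam).div_const n).sub (integrable_const 1)).const_mul _
  have hinti : Integrable (fun ω => f (ξ 0 ω)) ℙ := by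
    rw [show (fun ω => f (ξ 0 ω)) = f ∘ (ξ 0) from rfl,
      ← integrable_map_measure hfm.aestronglyMeasurable (hξmeas 0).aemeasurable, hξlaw 0]
    exact hintf
  have hindep : Pairwise (Function.onFun (IndepFun · · ℙ) fun t ω => f (ξ t ω)) :=
    fun i j hij => (hξindep.indepFun hij).comp hfm hfm
  have hident : ∀ i, IdentDistrib (fun ω => f (ξ i ω)) (fun ω => f (ξ 0 ω)) ℙ ℙ := by
    intro i
    have hξid : IdentDistrib (ξ i) (ξ 0) ℙ ℙ :=
      ⟨(hξmeas i).aemeasurable, (hξmeas 0).aemeasurable, by rw [hξlaw i, hξlaw 0]⟩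
    exact hξid.comp hfm
  have hn0 : (n : ℝ) ≠ 0 := Nat.cast_ne_zero.mpr (by omega)
  have hmean : ∫ ω, f (ξ 0 ω) ∂ℙ = (1 / (2 * d * n)) * (M - 1) := by
    rw [← integral_map (hξmeas 0).aemeasurable hfm.aestronglyMeasurable, hξlaw 0, hf]
    rw [integral_const_mul, integral_sub ((integrable_sum_sq n lam hlam).div_const n)
      (integrable_const 1), integral_div, integral_const, integral_sum_sq n lam hn hlam, ← hM]
    simp only [probReal_univ, measure_univ, ENNReal.toReal_one, smul_eq_mul, one_mul]
    field_simp
    ring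
  have hsl := strong_law_ae_real (fun t ω => f (ξ t ω)) hinti hindep hident
  rw [show ℙ[fun ω => f (ξ 0 ω)] = (1 / (2 * d * n)) * (M - 1) from hmean] at hsl
  filter_upwards [hsl] with ω hω
  have hσ : ∀ t, σ t ω = σ0 * Real.exp (∑ i ∈ Finset.range t, f (ξ i ω)) := by
    intro t
    induction t with
    | zero => simp [h0]
    | succ t ih =>
        rw [hrec, ih, Finset.sum_range_succ, Real.exp_add, hf]
        ring
  have hlog : ∀ t, Real.log (σ t ω / σ0) = ∑ i ∈ Finset.range t, f (ξ i ω) := by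
    intro t
    rw [hσ t, mul_comm, mul_div_assoc, div_self (ne_of_gt hσ0), mul_one, Real.log_exp]
  have : (fun t : ℕ => Real.log (σ t ω / σ0) / t)
      = fun t : ℕ => (∑ i ∈ Finset.range t, f (ξ i ω)) / t := by
    funext t; rw [hlog]
  rw [this]
  exact hω
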